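/- Fix p ≥ 1. Let μ and ν be finite positive Borel measures on ℝ^d and let (B_i)_{i∈I} be a countable measurable partition of a set containing the supports of μ and ν, such that μ(B_i) = ν(B_i) for every i. Then W_p^p(μ, ν) ≤ Σ_{i∈I} W_p^p( μ|_{B_i}, ν|_{B_i} ), where μ|_B denotes the restriction of μ to B. -/

import Mathlib

open MeasureTheory ENNReal

noncomputable section

/-- The `p`-th power of the `p`-Wasserstein distance between two positive Borel
measures on `ℝ^d`: infimum over couplings of the integral of `dist^p`. -/
def WpPow {d : ℕ} (p : ℝ)
    (μ ν : Measure (EuclideanSpace ℝ (Fin d))) : ℝ≥0∞ :=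
  ⨅ π ∈ {π : Measure (EuclideanSpace ℝ (Fin d) × EuclideanSpace ℝ (Fin d)) |
      π.map Prod.fst = μ ∧ π.map Prod.snd = ν},
    ∫⁻ z, edist z.1 z.2 ^ p ∂π

/-- Subadditivity of the transport cost over a countable measurable partition: if
`(B_i)` is a countable measurable partition of a set carrying both `μ` and `ν`, and
`μ(B_i) = ν(B_i)` for every `i`, then `W_p^p(μ, ν) ≤ Σ_i W_p^p(μ|_{B_i}, ν|_{B_i})`. -/
theorem wasserstein_partition_subadditive (p : ℝ) (hp : 1 ≤ p) (d : ℕ)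
    (μ ν : Measure (EuclideanSpace ℝ (Fin d)))
    (hμfin : IsFiniteMeasure μ) (hνfin : IsFiniteMeasure ν)
    (ι : Type) (hι : Countable ι)
    (B : ι → Set (EuclideanSpace ℝ (Fin d)))
    (hmeas : ∀ i, MeasurableSet (B i))
    (hdisj : Pairwise (Function.onFun Disjoint B))
    -- the union of the `B i` carries both `μ` and `ν`
    (hμsupp : μ (⋃ i, B i)ᶜ = 0) (hνsupp : ν (⋃ i, B i)ᶜ = 0)
    (hmass : ∀ i, μ (B i) = ν (B i)) :
    WpPow p μ ν ≤ ∑' i, WpPow p (μ.restrict (B i)) (ν.restrict (B i)) := by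
  haveI := hι
  set S := ∑' i, WpPow p (μ.restrict (B i)) (ν.restrict (B i)) with hS
  rcases eq_or_ne S ⊤ with hStop | hStop
  · rw [hStop]; exact le_top
  -- each term is finite
  have hfin : ∀ i, WpPow p (μ.restrict (B i)) (ν.restrict (B i)) ≠ ⊤ := by
    intro i
    exact ne_top_of_le_ne_top hStop (ENNReal.le_tsum i)
  -- reconstruction of μ and ν from restrictions
  have hμsum : Measure.sum (fun i => μ.restrict (B i)) = μ := by
    rw [← Measure.restrict_iUnion hdisj hmeas]
    exact Measure.restrict_eq_self_of_ae_mem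
      (by rwa [MeasureTheory.ae_iff])
  have hνsum : Measure.sum (fun i => ν.restrict (B i)) = ν := by
    rw [← Measure.restrict_iUnion hdisj hmeas]
    exact Measure.restrict_eq_self_of_ae_mem
      (by rwa [MeasureTheory.ae_iff])
  refine ENNReal.le_of_forall_pos_le_add fun ε hε _ => ?_
  obtain ⟨ε', hε'pos, hε'sum⟩ :=
    ENNReal.exists_pos_sum_of_countable' (ε := (ε : ℝ≥0∞)) (by exact_mod_cast hε.ne') ι
  -- choose near-optimal couplings
  have hchoice : ∀ i, ∃ π :
      Measure (EuclideanSpace ℝ (Fin d) × EuclideanSpace ℝ (Fin d)),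
      (π.map Prod.fst = μ.restrict (B i) ∧ π.map Prod.snd = ν.restrict (B i)) ∧
      (∫⁻ z, edist z.1 z.2 ^ p ∂π) ≤
        WpPow p (μ.restrict (B i)) (ν.restrict (B i)) + ε' i := by
    intro i
    have hlt : WpPow p (μ.restrict (B i)) (ν.restrict (B i)) <
        WpPow p (μ.restrict (B i)) (ν.restrict (B i)) + ε' i :=
      ENNReal.lt_add_right (hfin i) (hε'pos i).ne'
    rw [WpPow, iInf_lt_iff] at hlt
    obtain ⟨π, hlt⟩ := hlt
    rw [iInf_lt_iff] at hlt
    obtain ⟨hπ, hπlt⟩ := hlt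
    exact ⟨π, hπ, hπlt.le⟩
  choose π hπ hπcost using hchoice
  -- the summed coupling
  set Ξ := Measure.sum π with hΞ
  have hfst : Ξ.map Prod.fst = μ := by
    rw [hΞ, Measure.map_sum measurable_fst.aemeasurable]
    simp_rw [fun i => (hπ i).1]
    exact hμsum
  have hsnd : Ξ.map Prod.snd = ν := by
    rw [hΞ, Measure.map_sum measurable_snd.aemeasurable]
    simp_rw [fun i => (hπ i).2]
    exact hνsum
  have hle : WpPow p μ ν ≤ ∫⁻ z, edist z.1 z.2 ^ p ∂Ξ :=
    iInf₂_le Ξ ⟨hfst, hsnd⟩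
  refine hle.trans ?_
  rw [hΞ, lintegral_sum_measure]
  calc ∑' i, ∫⁻ z, edist z.1 z.2 ^ p ∂(π i)
      ≤ ∑' i, (WpPow p (μ.restrict (B i)) (ν.restrict (B i)) + ε' i) :=
        ENNReal.tsum_le_tsum hπcost
    _ = S + ∑' i, ε' i := by rw [ENNReal.tsum_add, hS]
    _ ≤ S + ε := add_le_add_right hε'sum.le S
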